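/- Let D > 1 be a real number, and for 1 < p < D let C_p = C₁ D^{1−1/D−1/p} ((p−1)/(D−p))^{1/p'} (p' Γ(D) / (Γ(D/p)Γ(D/p')))^{1/D}, where p' = p/(p−1) and C₁ > 0 is a fixed constant. Then there is a constant C₀ (depending only on D and C₁) such that C_p ≤ C₀ (p*)^{1−1/D} for all 1 < p < D, where p* = pD/(D−p). -/

import Mathlib

open Real

/-- Bound on the optimal weighted Sobolev constant `C_p` as `p` approaches `D`. -/
theorem sobolev_constant_bound (D C₁ : ℝ) (hD : 1 < D) (hC₁ : 0 < C₁) :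
    ∃ C₀ : ℝ, ∀ p : ℝ, 1 < p → p < D →
      C₁ * D ^ (1 - 1 / D - 1 / p) * ((p - 1) / (D - p)) ^ (1 / (p / (p - 1))) *
          ((p / (p - 1)) * Real.Gamma D /
            (Real.Gamma (D / p) * Real.Gamma (D / (p / (p - 1))))) ^ (1 / D)
        ≤ C₀ * (p * D / (D - p)) ^ (1 - 1 / D) := by
  have hD0 : (0:ℝ) < D := lt_trans one_pos hD
  -- minimum of Gamma on [1, D]
  have hcont : ContinuousOn Real.Gamma (Set.Icc (1:ℝ) D) := by
    intro x hx
    have hx1 : (1:ℝ) ≤ x := hx.1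
    exact (Real.differentiableAt_Gamma (fun m => by
      have h0 : (0:ℝ) < x := lt_of_lt_of_le one_pos hx1
      have hm : (0:ℝ) ≤ (m:ℝ) := Nat.cast_nonneg m
      intro h; rw [h] at h0; linarith)).continuousAt.continuousWithinAt
  obtain ⟨x₀, hx₀K, hmin⟩ := (isCompact_Icc : IsCompact (Set.Icc (1:ℝ) D)).exists_isMinOn
    ⟨1, by constructor <;> simp [hD.le]⟩ hcont
  set c : ℝ := Real.Gamma x₀ with hc_def
  have hc : 0 < c := Real.Gamma_pos_of_pos (lt_of_lt_of_le one_pos hx₀K.1)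
  have hcle : ∀ y ∈ Set.Icc (1:ℝ) D, c ≤ Real.Gamma y := fun y hy => hmin hy
  refine ⟨C₁ * D * (D * Real.Gamma D / c ^ 2) ^ (1 / D), ?_⟩
  intro p hp hpD
  have hp0 : (0:ℝ) < p := lt_trans one_pos hp
  have hp1 : (0:ℝ) < p - 1 := by linarith
  have hDp : (0:ℝ) < D - p := by linarith
  set A := D ^ (1 - 1 / D - 1 / p) with hA_def
  set a : ℝ := (p - 1) / (D - p) with ha_def
  have ha0 : 0 ≤ a := by positivity
  have hastar : a ≤ p * D / (D - p) := by
    rw [ha_def]; gcongr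
    nlinarith
  have hstar1 : (1:ℝ) ≤ p * D / (D - p) := by
    rw [le_div_iff₀ hDp]; nlinarith
  have hexp : 1 / (p / (p - 1)) = 1 - 1 / p := by
    rw [one_div_div]; field_simp
  have hexple : 1 - 1 / p ≤ 1 - 1 / D := by
    have : 1 / D ≤ 1 / p := one_div_le_one_div_of_le hp0 hpD.le
    linarith
  have hexp0 : 0 ≤ 1 - 1 / p := by
    have : 1 / p ≤ 1 := by rw [div_le_one hp0]; linarith
    linarith
  have hexpD0 : 0 ≤ 1 - 1 / D := by
    have : 1 / D ≤ 1 := by rw [div_le_one hD0]; linarith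
    linarith
  -- Bound on B
  have hB : a ^ (1 / (p / (p - 1))) ≤ (p * D / (D - p)) ^ (1 - 1 / D) := by
    rw [hexp]
    rcases le_total a 1 with h1 | h1
    · calc a ^ (1 - 1 / p) ≤ 1 := Real.rpow_le_one ha0 h1 hexp0
        _ ≤ (p * D / (D - p)) ^ (1 - 1 / D) := Real.one_le_rpow hstar1 hexpD0
    · calc a ^ (1 - 1 / p) ≤ a ^ (1 - 1 / D) :=
          Real.rpow_le_rpow_of_exponent_le h1 hexple
        _ ≤ (p * D / (D - p)) ^ (1 - 1 / D) := Real.rpow_le_rpow ha0 hastar hexpD0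
  -- Bound on A
  have hA : A ≤ D := by
    rw [hA_def]
    calc D ^ (1 - 1 / D - 1 / p) ≤ D ^ (1:ℝ) :=
        Real.rpow_le_rpow_of_exponent_le hD.le (by
          have h1 := one_div_pos.mpr hD0
          have h2 := one_div_pos.mpr hp0
          linarith)
      _ = D := Real.rpow_one D
  -- Bound on the Gamma factor
  set x : ℝ := D / (p / (p - 1)) with hx_def
  have hx0 : 0 < x := by rw [hx_def]; positivity
  have hxD : x + 1 ≤ D := by
    rw [hx_def, div_div_eq_mul_div]
    rw [div_add' _ _ _ hp0.ne', div_le_iff₀ hp0]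
    nlinarith
  have hx1D : (1:ℝ) ≤ x + 1 := by linarith
  have hDp1 : (1:ℝ) ≤ D / p := by rw [le_div_iff₀ hp0]; linarith
  have hDpD : D / p ≤ D := by
    rw [div_le_iff₀ hp0]; nlinarith
  have hΓ1 : c ≤ Real.Gamma (D / p) := hcle _ ⟨hDp1, hDpD⟩
  have hΓ2 : c ≤ Real.Gamma (x + 1) := hcle _ ⟨hx1D, hxD⟩
  have hΓ1pos : 0 < Real.Gamma (D / p) := lt_of_lt_of_le hc hΓ1
  have hΓ2pos : 0 < Real.Gamma (x + 1) := lt_of_lt_of_le hc hΓ2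
  have hΓxpos : 0 < Real.Gamma x := Real.Gamma_pos_of_pos hx0
  have hΓD : 0 < Real.Gamma D := Real.Gamma_pos_of_pos hD0
  have hGadd : Real.Gamma (x + 1) = x * Real.Gamma x := Real.Gamma_add_one hx0.ne'
  have hkey : p / (p - 1) * Real.Gamma D / (Real.Gamma (D / p) * Real.Gamma x)
      = D * Real.Gamma D / (Real.Gamma (D / p) * Real.Gamma (x + 1)) := by
    rw [hGadd, hx_def]
    field_simp
  have hGbound : p / (p - 1) * Real.Gamma D / (Real.Gamma (D / p) * Real.Gamma x)
      ≤ D * Real.Gamma D / c ^ 2 := by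
    rw [hkey]
    apply div_le_div_of_nonneg_left (by positivity) (by positivity)
    calc c ^ 2 = c * c := sq c
      _ ≤ Real.Gamma (D / p) * Real.Gamma (x + 1) :=
          mul_le_mul hΓ1 hΓ2 hc.le hΓ1pos.le
  have hG : (p / (p - 1) * Real.Gamma D / (Real.Gamma (D / p) * Real.Gamma x)) ^ (1 / D)
      ≤ (D * Real.Gamma D / c ^ 2) ^ (1 / D) :=
    Real.rpow_le_rpow (by positivity) hGbound (by positivity)
  -- Combine
  have hBnn : 0 ≤ a ^ (1 / (p / (p - 1))) := Real.rpow_nonneg ha0 _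
  have hGnn : 0 ≤ (p / (p - 1) * Real.Gamma D / (Real.Gamma (D / p) * Real.Gamma x)) ^ (1 / D) := by
    apply Real.rpow_nonneg; positivity
  have hAnn : 0 ≤ A := by rw [hA_def]; positivity
  calc C₁ * A * a ^ (1 / (p / (p - 1)))
        * (p / (p - 1) * Real.Gamma D / (Real.Gamma (D / p) * Real.Gamma x)) ^ (1 / D)
      ≤ C₁ * D * ((p * D / (D - p)) ^ (1 - 1 / D)) * ((D * Real.Gamma D / c ^ 2) ^ (1 / D)) := by
        apply mul_le_mul _ hG hGnn (by positivity)
        apply mul_le_mul _ hB hBnn (by positivity)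
        exact mul_le_mul_of_nonneg_left hA hC₁.le
    _ = C₁ * D * (D * Real.Gamma D / c ^ 2) ^ (1 / D) * (p * D / (D - p)) ^ (1 - 1 / D) := by
        ring
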